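/- arXiv:0710.2571 — 3 statements merged into one kernel-verified Lean document; each statement's English description precedes it below -/
import Mathlib

section
/- Let (Λ, 𝒢) be a labeled-graph in which every vertex group is a directly-indecomposable cyclic group, and let x be a CP element of W(Λ, 𝒢). Then the centralizer of x in W(Λ, 𝒢) equals W(star(x)). -/
open Monoid

open scoped commutatorElement

section GraphProduct

variable {V : Type} (Γ : SimpleGraph V) (G : V → Type) [∀ v, Group (G v)]

/-- The relations of the graph product: the normal closure of the commutators
`[g, h]` with `g ∈ G u`, `h ∈ G v` and `u, v` adjacent. -/
def gpRel : Subgroup (CoprodI G) :=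
  Subgroup.normalClosure
    {x | ∃ (u v : V) (g : G u) (h : G v), Γ.Adj u v ∧ x = ⁅CoprodI.of g, CoprodI.of h⁆}

instance : (gpRel Γ G).Normal := Subgroup.normalClosure_normal

/-- The graph product of the family of groups `G` over the graph `Γ`. -/
def GP := CoprodI G ⧸ gpRel Γ G

instance : Group (GP Γ G) := QuotientGroup.Quotient.group _

/-- The canonical map from a vertex group into the graph product. -/
def GP.of (v : V) : G v →* GP Γ G := (QuotientGroup.mk' (gpRel Γ G)).comp CoprodI.of

/-- The subgroup `W(U)` of the graph product generated by the images of the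
vertex groups `G u`, `u ∈ U`. -/
def WS (U : Set V) : Subgroup (GP Γ G) := ⨆ u ∈ U, (GP.of Γ G u).range

/-- The support of an element: the smallest vertex set `S` with `g ∈ W(S)`. -/
def supp (g : GP Γ G) : Set V := ⋂₀ {S : Set V | g ∈ WS Γ G S}

/-- The cyclic support of an element. -/
def supc (g : GP Γ G) : Set V := {u | ∀ w : GP Γ G, u ∈ supp Γ G (w * g * w⁻¹)}

end GraphProduct

/-- A group is directly-indecomposable cyclic if it is infinite cyclic or
cyclic of prime-power order. -/
def DICyclic (G : Type) [Group G] : Prop :=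
  IsCyclic G ∧ (Infinite G ∨ ∃ p n : ℕ, p.Prime ∧ Nat.card G = p ^ n)

/-- Word length with respect to a set `S` of generators. -/
noncomputable def wordLength {G : Type} [Group G] (S : Set G) (g : G) : ℕ :=
  sInf {n | ∃ l : List G, (∀ a ∈ l, a ∈ S) ∧ l.length = n ∧ l.prod = g}

/-- The equivalence relation: `u ∼ v` iff `u` and `v` lie in exactly the same
maximal cliques. -/
def simSetoid {V : Type} (Λ : SimpleGraph V) : Setoid V :=
  ⟨fun u v => ∀ s : Set V, Maximal Λ.IsClique s → (u ∈ s ↔ v ∈ s),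
   ⟨fun _ _ _ => Iff.rfl, fun h s hs => (h s hs).symm, fun h h' s hs => (h s hs).trans (h' s hs)⟩⟩

/-- The `T₀`-quotient graph. -/
def T0Q {V : Type} (Λ : SimpleGraph V) : SimpleGraph (Quotient (simSetoid Λ)) where
  Adj a b := a ≠ b ∧ ∃ u v : V,
    Quotient.mk (simSetoid Λ) u = a ∧ Quotient.mk (simSetoid Λ) v = b ∧ Λ.Adj u v
  symm := ⟨by rintro a b ⟨hne, u, v, hu, hv, h⟩; exact ⟨hne.symm, v, u, hv, hu, h.symm⟩⟩
  loopless := ⟨by rintro a ⟨hne, -⟩; exact hne rfl⟩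

/-- The vertex group of the `T₀`-quotient at a class `a`: the direct product
of the vertex groups over the class. -/
def classGroup {V : Type} (Λ : SimpleGraph V) (G : V → Type) [∀ v, Group (G v)]
    (a : Quotient (simSetoid Λ)) : Type :=
  ∀ v : {v : V // Quotient.mk (simSetoid Λ) v = a}, G v.1

instance {V : Type} (Λ : SimpleGraph V) (G : V → Type) [∀ v, Group (G v)]
    (a : Quotient (simSetoid Λ)) : Group (classGroup Λ G a) :=
  inferInstanceAs (Group (∀ v : {v : V // Quotient.mk (simSetoid Λ) v = a}, G v.1))

section GPBasics

open Monoid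

variable {V : Type} {Γ : SimpleGraph V} {G : V → Type} [∀ v, Group (G v)]

namespace GP

variable (Γ G) in
theorem mk_surjective : Function.Surjective (QuotientGroup.mk' (gpRel Γ G)) :=
  QuotientGroup.mk'_surjective _

theorem of_commute {u v : V} (h : Γ.Adj u v) (g : G u) (k : G v) :
    Commute (GP.of Γ G u g) (GP.of Γ G v k) := by
  have : (QuotientGroup.mk' (gpRel Γ G)) ⁅CoprodI.of g, CoprodI.of k⁆ = 1 := by
    rw [QuotientGroup.mk'_apply, QuotientGroup.eq_one_iff]
    exact Subgroup.subset_normalClosure ⟨u, v, g, k, h, rfl⟩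
  have h2 : ⁅GP.of Γ G u g, GP.of Γ G v k⁆ = 1 := by
    rw [map_commutatorElement] at this
    exact this
  exact commutatorElement_eq_one_iff_commute.mp h2

/-- Universal property of the graph product. -/
def lift {K : Type*} [Group K] (f : ∀ v, G v →* K)
    (hf : ∀ u v, Γ.Adj u v → ∀ g k, Commute (f u g) (f v k)) : GP Γ G →* K :=
  QuotientGroup.lift (gpRel Γ G) (CoprodI.lift f) <| by
    intro x hx
    rw [MonoidHom.mem_ker]
    refine Subgroup.normalClosure_le_normal (N := (CoprodI.lift f).ker) ?_ hx
    rintro y ⟨u, v, g, k, hadj, rfl⟩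
    rw [SetLike.mem_coe, MonoidHom.mem_ker, commutatorElement_def]
    simp only [map_mul, map_inv, CoprodI.lift_of]
    rw [← commutatorElement_def, commutatorElement_eq_one_iff_commute]
    exact hf u v hadj g k

@[simp]
theorem lift_of {K : Type*} [Group K] (f : ∀ v, G v →* K) (hf) (u : V) (g : G u) :
    lift f hf (GP.of Γ G u g) = f u g := by
  show QuotientGroup.lift _ _ _ (QuotientGroup.mk (CoprodI.of g)) = _
  rw [QuotientGroup.lift_mk', CoprodI.lift_of]

theorem hom_ext {K : Type*} [Group K] {f g : GP Γ G →* K}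
    (h : ∀ u, f.comp (GP.of Γ G u) = g.comp (GP.of Γ G u)) : f = g := by
  have h1 : f.comp (QuotientGroup.mk' (gpRel Γ G)) = g.comp (QuotientGroup.mk' (gpRel Γ G)) := by
    refine CoprodI.ext_hom _ _ fun i => ?_
    ext x
    exact DFunLike.congr_fun (h i) x
  ext x
  obtain ⟨y, rfl⟩ := mk_surjective Γ G x
  exact DFunLike.congr_fun h1 y

theorem induction_on {motive : GP Γ G → Prop} (x : GP Γ G)
    (of : ∀ (u : V) (g : G u), motive (GP.of Γ G u g))
    (one : motive 1)
    (mul : ∀ x y, motive x → motive y → motive (x * y)) : motive x := by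
  obtain ⟨y, rfl⟩ := mk_surjective Γ G x
  induction y using CoprodI.induction_on with
  | of i g => exact of i g
  | mul x y ihx ihy => rw [map_mul]; exact mul _ _ ihx ihy
  | one => rw [map_one]; exact one

end GP

theorem of_mem_WS {S : Set V} {u : V} (hu : u ∈ S) (g : G u) :
    GP.of Γ G u g ∈ WS Γ G S :=
  (le_iSup₂ (f := fun (u : V) (_ : u ∈ S) => (GP.of Γ G u).range) u hu) ⟨g, rfl⟩

theorem WS_le_iff {S : Set V} {H : Subgroup (GP Γ G)} :
    WS Γ G S ≤ H ↔ ∀ u ∈ S, ∀ g : G u, GP.of Γ G u g ∈ H := by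
  constructor
  · exact fun h u hu g => h (of_mem_WS hu g)
  · intro h
    rw [WS, iSup₂_le_iff]
    rintro u hu _ ⟨g, rfl⟩
    exact h u hu g

theorem WS_mono {S T : Set V} (h : S ⊆ T) : WS Γ G S ≤ WS Γ G T :=
  WS_le_iff.mpr fun u hu g => of_mem_WS (h hu) g

theorem WS_eq_closure (S : Set V) :
    WS Γ G S = Subgroup.closure {x | ∃ u ∈ S, ∃ g : G u, GP.of Γ G u g = x} := by
  refine le_antisymm (WS_le_iff.mpr fun u hu g => Subgroup.subset_closure ⟨u, hu, g, rfl⟩) ?_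
  rw [Subgroup.closure_le]
  rintro _ ⟨u, hu, g, rfl⟩
  exact of_mem_WS hu g

theorem WS_univ : WS Γ G Set.univ = ⊤ := by
  have h : ∀ x : GP Γ G, x ∈ WS Γ G Set.univ := by
    intro x
    induction x using GP.induction_on with
    | of u g => exact of_mem_WS (Set.mem_univ u) g
    | one => exact one_mem _
    | mul x y hx hy => exact mul_mem hx hy
  exact le_antisymm le_top fun x _ => h x

/-- Mapping a `WS` through a homomorphism whose values on generators lie in `T`. -/
theorem WS_map_le {K : Type*} [Group K] (f : GP Γ G →* K) {S : Set V} {T : Subgroup K}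
    (h : ∀ u ∈ S, ∀ g : G u, f (GP.of Γ G u g) ∈ T) :
    ∀ x ∈ WS Γ G S, f x ∈ T := by
  intro x hx
  have : WS Γ G S ≤ T.comap f := WS_le_iff.mpr h
  exact this hx

open Classical in
/-- The retraction of the graph product onto `WS S`. -/
noncomputable def piRetr (Γ : SimpleGraph V) (G : V → Type) [∀ v, Group (G v)] (S : Set V) :
    GP Γ G →* GP Γ G :=
  GP.lift (fun u => if _ : u ∈ S then GP.of Γ G u else 1) <| by
    intro u v hadj g k
    by_cases hu : u ∈ S <;> by_cases hv : v ∈ S <;>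
      simp [hu, hv, GP.of_commute hadj, Commute.one_left, Commute.one_right]

theorem piRetr_of_mem {S : Set V} {u : V} (hu : u ∈ S) (g : G u) :
    piRetr Γ G S (GP.of Γ G u g) = GP.of Γ G u g := by
  rw [piRetr, GP.lift_of, dif_pos hu]

theorem piRetr_of_not_mem {S : Set V} {u : V} (hu : u ∉ S) (g : G u) :
    piRetr Γ G S (GP.of Γ G u g) = 1 := by
  rw [piRetr, GP.lift_of, dif_neg hu, MonoidHom.one_apply]

theorem piRetr_fix {S : Set V} {x : GP Γ G} (hx : x ∈ WS Γ G S) :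
    piRetr Γ G S x = x := by
  rw [WS_eq_closure] at hx
  induction hx using Subgroup.closure_induction with
  | mem z hz => obtain ⟨u, hu, g, rfl⟩ := hz; exact piRetr_of_mem hu g
  | one => exact map_one _
  | mul a b _ _ ha hb => rw [map_mul, ha, hb]
  | inv a _ ha => rw [map_inv, ha]

theorem piRetr_mem {S T : Set V} {x : GP Γ G} (hx : x ∈ WS Γ G T) :
    piRetr Γ G S x ∈ WS Γ G (S ∩ T) := by
  refine WS_map_le _ (fun u hu g => ?_) x hx
  by_cases h : u ∈ S
  · rw [piRetr_of_mem h]; exact of_mem_WS (Set.mem_inter h hu) g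
  · rw [piRetr_of_not_mem h]; exact one_mem _

theorem mem_WS_inter {S T : Set V} {x : GP Γ G} (hS : x ∈ WS Γ G S) (hT : x ∈ WS Γ G T) :
    x ∈ WS Γ G (S ∩ T) := by
  have := piRetr_mem (S := S) hT
  rwa [piRetr_fix hS] at this

end GPBasics
section PushoutLemmas

open Monoid Monoid.PushoutI

variable {ι : Type} {K : ι → Type} [∀ i, Group (K i)] {H : Type} [Group H]
  {φ : ∀ i, H →* K i}

variable (φ) in
/-- The product of a list of letters in the pushout. -/
def prodL (l : List (Σ i, K i)) : PushoutI φ :=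
  (l.map fun a => of a.1 a.2).prod

variable (φ) in
/-- A good (reduced) list of letters. -/
def GoodL (l : List (Σ i, K i)) : Prop :=
  (∀ a ∈ l, a.2 ∉ (φ a.1).range) ∧ l.IsChain fun a b => a.1 ≠ b.1

theorem prodL_nil : prodL φ ([] : List (Σ i, K i)) = 1 := rfl

theorem prodL_cons (a : Σ i, K i) (l : List (Σ i, K i)) :
    prodL φ (a :: l) = of a.1 a.2 * prodL φ l := by
  simp [prodL]

theorem prodL_append (l₁ l₂ : List (Σ i, K i)) :
    prodL φ (l₁ ++ l₂) = prodL φ l₁ * prodL φ l₂ := by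
  simp [prodL]

/-- Reverse a list of letters and invert each letter. -/
def revinv (l : List (Σ i, K i)) : List (Σ i, K i) :=
  (l.map fun a => ⟨a.1, a.2⁻¹⟩).reverse

theorem revinv_append_singleton (l : List (Σ i, K i)) (a : Σ i, K i) :
    revinv (l ++ [a]) = ⟨a.1, a.2⁻¹⟩ :: revinv l := by
  simp [revinv]

theorem prodL_revinv (l : List (Σ i, K i)) : prodL φ (revinv l) = (prodL φ l)⁻¹ := by
  induction l using List.reverseRecOn with
  | nil => simp [revinv, prodL]
  | append_singleton l a ih =>
      rw [revinv_append_singleton, prodL_cons, prodL_append, ih]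
      simp [prodL, mul_comm]

theorem goodL_revinv {l : List (Σ i, K i)} (h : GoodL φ l) : GoodL φ (revinv l) := by
  obtain ⟨h1, h2⟩ := h
  constructor
  · intro a ha
    rw [revinv, List.mem_reverse, List.mem_map] at ha
    obtain ⟨b, hb, rfl⟩ := ha
    exact fun hr => h1 b hb (by simpa using inv_mem hr)
  · rw [revinv, List.isChain_reverse]
    refine (List.isChain_map _).mpr ?_
    exact h2.imp fun a b h => h.symm

/-- A nonempty good list does not multiply into the base group. -/
theorem GoodL.not_base (hφ : ∀ i, Function.Injective (φ i)) {l : List (Σ i, K i)}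
    (hl : GoodL φ l) (hne : l ≠ []) : prodL φ l ∉ (base φ).range := by
  intro hmem
  obtain ⟨h1, h2⟩ := hl
  have hn1 : ∀ a ∈ l, Sigma.snd a ≠ 1 := by
    intro a ha h1'
    exact h1 a ha (h1' ▸ one_mem _)
  let w : CoprodI.Word K := ⟨l, hn1, h2⟩
  have hred : Reduced φ w := fun a ha => h1 a ha
  have hprod : ofCoprodI w.prod = prodL φ l := by
    show ofCoprodI (φ := φ) (List.prod (l.map fun x => CoprodI.of x.2)) = _
    rw [← List.prod_hom _ (ofCoprodI (φ := φ)), List.map_map, prodL]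
    simp [Function.comp_def]
  have := hred.eq_empty_of_mem_range hφ (by rw [hprod]; exact hmem)
  apply hne
  simpa [w, CoprodI.Word.empty] using congr_arg CoprodI.Word.toList this

theorem of_mem_base_iff (hφ : ∀ i, Function.Injective (φ i)) {i : ι} {z : K i} :
    of (φ := φ) i z ∈ (base φ).range ↔ z ∈ (φ i).range := by
  constructor
  · rintro ⟨h, hh⟩
    have : of (φ := φ) i (φ i h) = of i z := by rw [of_apply_eq_base]; exact hh
    exact ⟨h, of_injective hφ i this⟩
  · rintro ⟨h, rfl⟩
    exact ⟨h, (of_apply_eq_base φ i h).symm⟩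

/-- A good list of length at least two does not multiply into any vertex group. -/
theorem GoodL.not_of (hφ : ∀ i, Function.Injective (φ i)) {l : List (Σ i, K i)}
    (hl : GoodL φ l) (h2 : 2 ≤ l.length) (i : ι) : prodL φ l ∉ (of (φ := φ) i).range := by
  rintro ⟨a, ha⟩
  obtain ⟨hlet, hch⟩ := hl
  cases l with
  | nil => simp at h2
  | cons b rest =>
  obtain ⟨ib, gb⟩ := b
  have hrne : rest ≠ [] := by rintro rfl; simp at h2
  have hanr : a ∉ (φ i).range := by
    rintro ⟨h, rfl⟩
    exact GoodL.not_base hφ ⟨hlet, hch⟩ (by simp)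
      (ha ▸ ⟨h, (of_apply_eq_base φ i h).symm⟩)
  have hgbr : gb ∉ (φ ib).range := hlet ⟨ib, gb⟩ List.mem_cons_self
  have hrest_good : GoodL φ rest :=
    ⟨fun x hx => hlet x (List.mem_cons_of_mem _ hx), hch.tail⟩
  have hchh : ∀ y ∈ rest.head?, ib ≠ y.1 := by
    intro y hy
    exact (List.isChain_cons.mp hch).1 y hy
  rcases eq_or_ne i ib with rfl | hib
  · -- merge with the first letter
    have hprest : prodL φ rest = of i (gb⁻¹ * a) := by
      have h0 : prodL φ (⟨i, gb⟩ :: rest) = of i gb * prodL φ rest := prodL_cons _ _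
      rw [map_mul, map_inv, ha, h0]
      group
    by_cases hcr : gb⁻¹ * a ∈ (φ i).range
    · exact GoodL.not_base hφ hrest_good hrne
        (hprest ▸ (of_mem_base_iff hφ).mpr hcr)
    · set c := a⁻¹ * gb with hc
      have hcnr : c ∉ (φ i).range := by
        intro hr
        exact hcr (by simpa [hc] using inv_mem hr)
      have hgood : GoodL φ (⟨i, c⟩ :: rest) := by
        refine ⟨?_, List.isChain_cons.mpr ⟨hchh, hrest_good.2⟩⟩
        rintro x hx
        rcases List.mem_cons.mp hx with rfl | hx
        · exact hcnr
        · exact hrest_good.1 x hx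
      have hmem : prodL φ (⟨i, c⟩ :: rest) ∈ (base φ).range := by
        rw [prodL_cons]
        show of (φ := φ) i c * prodL φ rest ∈ _
        rw [hprest, ← map_mul]
        have : c * (gb⁻¹ * a) = 1 := by rw [hc]; group
        rw [this, map_one]
        exact one_mem _
      exact GoodL.not_base hφ hgood (by simp) hmem
  · -- prepend the letter `a⁻¹`
    have hgood : GoodL φ (⟨i, a⁻¹⟩ :: ⟨ib, gb⟩ :: rest) := by
      refine ⟨?_, List.isChain_cons_cons.mpr ⟨hib, hch⟩⟩
      rintro x hx
      rcases List.mem_cons.mp hx with rfl | hx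
      · exact fun hr => hanr (by simpa using inv_mem hr)
      · exact hlet x hx
    have hmem : prodL φ (⟨i, a⁻¹⟩ :: ⟨ib, gb⟩ :: rest) ∈ (base φ).range := by
      rw [prodL_cons]
      show of (φ := φ) i a⁻¹ * prodL φ (⟨ib, gb⟩ :: rest) ∈ _
      rw [← ha, map_inv, inv_mul_cancel]
      exact one_mem _
    exact GoodL.not_base hφ hgood (by simp) hmem

end PushoutLemmas
section PushoutConj

open Monoid Monoid.PushoutI

variable {ι : Type} {K : ι → Type} [∀ i, Group (K i)] {H : Type} [Group H]
  {φ : ∀ i, H →* K i}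

/-- Key lemma: if a good list conjugates `of j₀ x₀` into a vertex group, where no
`K j₀`-conjugate of `x₀` lies in the base group, then the product of the list lies
in the `j₀` vertex group. -/
theorem goodL_conj_mem (hφ : ∀ i, Function.Injective (φ i)) :
    ∀ l : List (Σ i, K i), GoodL φ l → ∀ (j₀ : ι) (x₀ : K j₀),
      (∀ c : K j₀, c * x₀ * c⁻¹ ∉ (φ j₀).range) → ∀ (i₀ : ι) (y : K i₀),
      prodL φ l * of j₀ x₀ * (prodL φ l)⁻¹ = of i₀ y →
      prodL φ l ∈ (of (φ := φ) j₀).range := by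
  intro l
  induction l using List.reverseRecOn with
  | nil => intro _ _ _ _ _ _ _; rw [prodL_nil]; exact one_mem _
  | append_singleton l' b ih =>
    intro hl j₀ x₀ Hx i₀ y heq
    obtain ⟨ib, gb⟩ := b
    have hl' : GoodL φ l' := by
      refine ⟨fun x hx => hl.1 x (List.mem_append_left _ hx), ?_⟩
      exact (List.isChain_append.mp hl.2).1
    rcases eq_or_ne ib j₀ with rfl | hne
    · -- absorb the last letter into `x₀`
      have Hx' : ∀ c : K ib, c * (gb * x₀ * gb⁻¹) * c⁻¹ ∉ (φ ib).range := by
        intro c hc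
        refine Hx (c * gb) ?_
        have hgrp : (c * gb) * x₀ * (c * gb)⁻¹ = c * (gb * x₀ * gb⁻¹) * c⁻¹ := by group
        rw [hgrp]
        exact hc
      have heq' : prodL φ l' * of ib (gb * x₀ * gb⁻¹) * (prodL φ l')⁻¹ = of i₀ y := by
        rw [← heq, prodL_append]
        simp only [prodL_cons, prodL_nil, mul_one]
        simp only [map_mul, map_inv]
        group
      have := ih hl' ib (gb * x₀ * gb⁻¹) Hx' i₀ y heq'
      rw [prodL_append]
      refine mul_mem this ?_
      simp only [prodL_cons, prodL_nil, mul_one]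
      exact ⟨gb, rfl⟩
    · -- contradiction via a long good list
      exfalso
      set l := l' ++ [(⟨ib, gb⟩ : Σ i, K i)] with hldef
      have hx0nr : x₀ ∉ (φ j₀).range := by simpa using Hx 1
      set m := l ++ (⟨j₀, x₀⟩ :: revinv l) with hm
      have hrevl : revinv l = ⟨ib, gb⁻¹⟩ :: revinv l' := revinv_append_singleton _ _
      have hgood : GoodL φ m := by
        constructor
        · intro x hx
          rw [hm, List.mem_append, List.mem_cons] at hx
          rcases hx with hx | rfl | hx
          · exact hl.1 x hx
          · exact hx0nr
          · exact (goodL_revinv hl).1 x hx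
        · rw [hm, List.isChain_append]
          refine ⟨hl.2, ?_, ?_⟩
          · rw [List.isChain_cons]
            refine ⟨?_, (goodL_revinv hl).2⟩
            intro y hy
            rw [hrevl] at hy
            simp only [List.head?_cons, Option.mem_some_iff] at hy
            subst hy
            exact hne.symm
          · intro a hala c hc
            have hgl : (l' ++ [(⟨ib, gb⟩ : Σ i, K i)]).getLast? = some ⟨ib, gb⟩ := by simp
            rw [hldef, hgl, Option.mem_some_iff] at hala
            subst hala
            simp only [List.head?_cons, Option.mem_some_iff] at hc
            subst hc
            exact hne
      have hlen : 2 ≤ m.length := by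
        have hll : l.length = l'.length + 1 := by simp [hldef]
        rw [hm, List.length_append, List.length_cons]
        omega
      have hprod : prodL φ m = of i₀ y := by
        rw [hm, prodL_append, prodL_cons, prodL_revinv, ← mul_assoc]
        exact heq
      exact GoodL.not_of hφ hgood hlen i₀ (hprod ▸ ⟨y, rfl⟩)

theorem normalWord_letters_not_range {d : NormalWord.Transversal φ} {i : ι} {g : K i}
    (hset : g ∈ d.set i) (hne : g ≠ 1) : g ∉ (φ i).range := by
  intro hr
  apply hne
  have hinj := (d.compl i).1
  have := hinj (a₁ := (⟨⟨g, hr⟩, ⟨1, d.one_mem i⟩⟩ : ((φ i).range : Set (K i)) × (d.set i)))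
    (a₂ := (⟨⟨1, one_mem _⟩, ⟨g, hset⟩⟩ : ((φ i).range : Set (K i)) × (d.set i))) (by simp)
  simpa using (congr_arg (fun p => (p.2 : K i)) this).symm

/-- Group-level corollary: if `g` conjugates `of j₀ x₀` into a vertex group, and no
`K j₀`-conjugate of `x₀` is in the base, then `g` and the target are in the `j₀` vertex group. -/
theorem pushout_conj_mem (hφ : ∀ i, Function.Injective (φ i)) {j₀ : ι} {x₀ : K j₀}
    (Hx : ∀ c : K j₀, c * x₀ * c⁻¹ ∉ (φ j₀).range) {g : PushoutI φ} {i₀ : ι} {y : K i₀}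
    (heq : g * of j₀ x₀ * g⁻¹ = of i₀ y) :
    g ∈ (of (φ := φ) j₀).range ∧ of (φ := φ) i₀ y ∈ (of (φ := φ) j₀).range := by
  classical
  obtain ⟨d⟩ := NormalWord.transversal_nonempty φ hφ
  set nw : NormalWord d := g • NormalWord.empty with hnw
  have hgprod : nw.prod = g := by
    rw [hnw, NormalWord.prod_smul, NormalWord.prod_empty, mul_one]
  set l : List (Σ i, K i) := nw.toList with hldef
  have hPeq : prodL φ l = ofCoprodI nw.toWord.prod := by
    show _ = ofCoprodI (φ := φ) (List.prod (l.map fun x => CoprodI.of x.2))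
    rw [← List.prod_hom _ (ofCoprodI (φ := φ)), List.map_map, prodL]
    simp [Function.comp_def]
  have hg : g = base φ nw.head * prodL φ l := by
    rw [← hgprod, NormalWord.prod, hPeq]
  have hgoodl : GoodL φ l := by
    constructor
    · intro a ha
      exact normalWord_letters_not_range (nw.normalized a.1 a.2 (by simpa using ha))
        (nw.toWord.ne_one a (by simpa using ha))
    · exact nw.toWord.chain_ne
  have heq' : prodL φ l * of j₀ x₀ * (prodL φ l)⁻¹
      = of i₀ (φ i₀ nw.head⁻¹ * y * φ i₀ nw.head) := by
    have h1 : prodL φ l = (base φ nw.head)⁻¹ * g := by rw [hg]; group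
    rw [h1]
    simp only [map_mul, of_apply_eq_base, map_inv]
    rw [mul_inv_rev, inv_inv]
    calc (base φ nw.head)⁻¹ * g * of j₀ x₀ * (g⁻¹ * base φ nw.head)
        = (base φ nw.head)⁻¹ * (g * of j₀ x₀ * g⁻¹) * base φ nw.head := by group
      _ = _ := by rw [heq]
  have hP : prodL φ l ∈ (of (φ := φ) j₀).range :=
    goodL_conj_mem hφ l hgoodl j₀ x₀ Hx _ _ heq'
  have hbase : base φ nw.head ∈ (of (φ := φ) j₀).range :=
    ⟨φ j₀ nw.head, of_apply_eq_base φ j₀ nw.head⟩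
  have hgmem : g ∈ (of (φ := φ) j₀).range := hg ▸ mul_mem hbase hP
  refine ⟨hgmem, ?_⟩
  rw [← heq]
  exact mul_mem (mul_mem hgmem ⟨x₀, rfl⟩) (inv_mem hgmem)

end PushoutConj
section Splitting

open Monoid Monoid.PushoutI

set_option maxHeartbeats 1000000

variable {V : Type} (Λ : SimpleGraph V) (G : V → Type) [∀ v, Group (G v)] (v : V)

/-- The induced graph on the complement of `v`. -/
abbrev spLA : SimpleGraph {w : V // w ≠ v} := Λ.comap Subtype.val

/-- The induced graph on the link of `v`. -/
abbrev spLC : SimpleGraph {w : V // Λ.Adj v w} := Λ.comap Subtype.val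

/-- Vertex groups over a subtype. -/
abbrev spG {P : V → Prop} : {w : V // P w} → Type := fun a => G a.1

/-- The graph product over the vertices different from `v`. -/
abbrev spA : Type := GP (spLA Λ v) (spG G)

/-- The graph product over the link of `v`. -/
abbrev spC : Type := GP (spLC Λ v) (spG G)

/-- The `B`-side of the splitting: `C × G v`. -/
abbrev spB : Type := spC Λ G v × G v

/-- The inclusion of `C` into `A`. -/
noncomputable def spCA : spC Λ G v →* spA Λ G v :=
  GP.lift (fun c => GP.of (spLA Λ v) (spG G) ⟨c.1, c.2.ne'⟩) fun c c' hadj g k => by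
    exact GP.of_commute (Γ := spLA Λ v) (G := spG G)
      (show (spLA Λ v).Adj ⟨c.1, c.2.ne'⟩ ⟨c'.1, c'.2.ne'⟩ from hadj) g k

theorem spCA_of (c : {w : V // Λ.Adj v w}) (g : G c.1) :
    spCA Λ G v (GP.of (spLC Λ v) (spG G) c g) = GP.of (spLA Λ v) (spG G) ⟨c.1, c.2.ne'⟩ g := by
  rw [spCA, GP.lift_of]

open Classical in
/-- The retraction from `A` onto `C`. -/
noncomputable def spAC : spA Λ G v →* spC Λ G v :=
  GP.lift (fun a => if h : Λ.Adj v a.1 then GP.of (spLC Λ v) (spG G) ⟨a.1, h⟩ else 1) <| by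
    intro a a' hadj g k
    by_cases ha : Λ.Adj v a.1 <;> by_cases ha' : Λ.Adj v a'.1
    · rw [dif_pos ha, dif_pos ha']
      exact GP.of_commute (Γ := spLC Λ v) (G := spG G)
        (show (spLC Λ v).Adj ⟨a.1, ha⟩ ⟨a'.1, ha'⟩ from hadj) g k
    · rw [dif_pos ha, dif_neg ha']; exact Commute.one_right _
    · rw [dif_neg ha, dif_pos ha']; exact Commute.one_left _
    · rw [dif_neg ha, dif_neg ha']; exact Commute.one_right _

theorem spCA_injective : Function.Injective (spCA Λ G v) := by
  have h : (spAC Λ G v).comp (spCA Λ G v) = MonoidHom.id _ := by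
    refine GP.hom_ext fun c => ?_
    ext g
    simp only [MonoidHom.comp_apply, MonoidHom.id_apply]
    rw [spCA_of, spAC, GP.lift_of, dif_pos c.2]
  intro a b hab
  have := congr_arg (spAC Λ G v) hab
  rw [← MonoidHom.comp_apply, ← MonoidHom.comp_apply, h, MonoidHom.id_apply,
    MonoidHom.id_apply] at this
  exact this

/-- The family of the two sides of the splitting. -/
abbrev spK (i : Bool) : Type := cond i (spB Λ G v) (spA Λ G v)

instance spKGroup : ∀ i : Bool, Group (spK Λ G v i) := fun i => by
  cases i
  · exact inferInstanceAs (Group (spA Λ G v))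
  · exact inferInstanceAs (Group (spB Λ G v))

/-- The base maps of the splitting. -/
noncomputable def spφ : ∀ i : Bool, spC Λ G v →* spK Λ G v i := fun i =>
  match i with
  | false => spCA Λ G v
  | true => MonoidHom.inl (spC Λ G v) (G v)

theorem spφ_injective : ∀ i, Function.Injective (spφ Λ G v i) := fun i =>
  match i with
  | false => spCA_injective Λ G v
  | true => fun a b h => by
      exact congr_arg (Prod.fst : spB Λ G v → spC Λ G v) h

/-- Cast between vertex groups. -/
def castHom {V : Type} (G : V → Type) [∀ v, Group (G v)] {u w : V} (h : u = w) :
    G u →* G w := by subst h; exact MonoidHom.id _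

@[simp] theorem castHom_rfl {V : Type} (G : V → Type) [∀ v, Group (G v)] (u : V) :
    castHom G (rfl : u = u) = MonoidHom.id _ := rfl

theorem sp_comm2 (c : spC Λ G v) (g : G v) :
    Commute (of (φ := spφ Λ G v) true ((MonoidHom.inl (spC Λ G v) (G v)) c))
      (of (φ := spφ Λ G v) true ((MonoidHom.inr (spC Λ G v) (G v)) g)) := by
  have : Commute ((MonoidHom.inl (spC Λ G v) (G v)) c)
      ((MonoidHom.inr (spC Λ G v) (G v)) g) := by
    simp [Commute, SemiconjBy, Prod.ext_iff]
  exact this.map (of true)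

theorem sp_key (u : V) (hw : Λ.Adj v u) (hwv : u ≠ v) (g : G u) :
    of (φ := spφ Λ G v) false (GP.of (spLA Λ v) (spG G) ⟨u, hwv⟩ g) =
      of (φ := spφ Λ G v) true ((MonoidHom.inl (spC Λ G v) (G v))
        (GP.of (spLC Λ v) (spG G) ⟨u, hw⟩ g)) := by
  have h1 : GP.of (spLA Λ v) (spG G) ⟨u, hwv⟩ g
      = spφ Λ G v false (GP.of (spLC Λ v) (spG G) ⟨u, hw⟩ g) := by
    show _ = spCA Λ G v _
    rw [spCA_of]
  rw [h1, of_apply_eq_base, ← of_apply_eq_base (spφ Λ G v) true]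
  rfl

theorem sp_comm (u : V) (hw : Λ.Adj v u) (hwv : u ≠ v) (k : G u) (g : G v) :
    Commute (of (φ := spφ Λ G v) false (GP.of (spLA Λ v) (spG G) ⟨u, hwv⟩ k))
      (of (φ := spφ Λ G v) true ((MonoidHom.inr (spC Λ G v) (G v)) g)) := by
  rw [sp_key Λ G v u hw hwv k]
  exact sp_comm2 Λ G v _ g

open Classical in
/-- The map from the graph product to the pushout. -/
noncomputable def spTheta : GP Λ G →* PushoutI (spφ Λ G v) :=
  GP.lift
    (fun u =>
      if h : u = v then
        ((of (φ := spφ Λ G v) true).comp (MonoidHom.inr (spC Λ G v) (G v))).comp (castHom G h)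
      else (of (φ := spφ Λ G v) false).comp (GP.of (spLA Λ v) (spG G) ⟨u, h⟩))
    (by
      intro u u' hadj g k
      by_cases hu : u = v <;> by_cases hu' : u' = v
      · exact absurd (hu ▸ hu' ▸ hadj) (Λ.irrefl)
      · subst hu
        rw [dif_pos rfl, dif_neg hu']
        simp only [MonoidHom.comp_apply, castHom_rfl, MonoidHom.id_apply]
        exact (sp_comm Λ G u u' hadj hu' k g).symm
      · subst hu'
        rw [dif_pos rfl, dif_neg hu]
        simp only [MonoidHom.comp_apply, castHom_rfl, MonoidHom.id_apply]
        exact sp_comm Λ G u' u (Λ.adj_symm hadj) hu g k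
      · rw [dif_neg hu, dif_neg hu']
        exact ((GP.of_commute (Γ := spLA Λ v) (G := spG G)
          (show (spLA Λ v).Adj ⟨u, hu⟩ ⟨u', hu'⟩ from hadj) g k).map (of (φ := spφ Λ G v) false)))

theorem spTheta_of_v (g : G v) :
    spTheta Λ G v (GP.of Λ G v g) = of (φ := spφ Λ G v) true ((1 : spC Λ G v), g) := by
  rw [spTheta, GP.lift_of, dif_pos rfl]
  rfl

theorem spTheta_of_ne {u : V} (h : u ≠ v) (g : G u) :
    spTheta Λ G v (GP.of Λ G u g) =
      of (φ := spφ Λ G v) false (GP.of (spLA Λ v) (spG G) ⟨u, h⟩ g) := by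
  rw [spTheta, GP.lift_of, dif_neg h]
  rfl

/-- The map from `C` back into the graph product. -/
noncomputable def spFC : spC Λ G v →* GP Λ G :=
  GP.lift (fun c => GP.of Λ G c.1) fun c c' hadj g k => by
    exact GP.of_commute (Γ := Λ) (G := G) (show Λ.Adj c.1 c'.1 from hadj) g k

theorem spFC_of (c : {w : V // Λ.Adj v w}) (g : G c.1) :
    spFC Λ G v (GP.of (spLC Λ v) (spG G) c g) = GP.of Λ G c.1 g := by
  rw [spFC, GP.lift_of]

/-- The map from `A` back into the graph product. -/
noncomputable def spFA : spA Λ G v →* GP Λ G :=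
  GP.lift (fun a => GP.of Λ G a.1) fun a a' hadj g k => by
    exact GP.of_commute (Γ := Λ) (G := G) (show Λ.Adj a.1 a'.1 from hadj) g k

theorem spFA_of (a : {w : V // w ≠ v}) (g : G a.1) :
    spFA Λ G v (GP.of (spLA Λ v) (spG G) a g) = GP.of Λ G a.1 g := by
  rw [spFA, GP.lift_of]

theorem spFC_mem (c : spC Λ G v) : spFC Λ G v c ∈ WS Λ G {w | Λ.Adj v w} := by
  induction c using GP.induction_on with
  | of c g => rw [spFC_of]; exact of_mem_WS c.2 g
  | one => rw [map_one]; exact one_mem _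
  | mul a b ha hb => rw [map_mul]; exact mul_mem ha hb

theorem spFA_mem (a : spA Λ G v) : spFA Λ G v a ∈ WS Λ G {w | w ≠ v} := by
  induction a using GP.induction_on with
  | of a g => rw [spFA_of]; exact of_mem_WS (show (a : V) ∈ {w | w ≠ v} from a.2) g
  | one => rw [map_one]; exact one_mem _
  | mul a b ha hb => rw [map_mul]; exact mul_mem ha hb

theorem spFC_comm (c : spC Λ G v) (g : G v) :
    Commute (spFC Λ G v c) (GP.of Λ G v g) := by
  induction c using GP.induction_on with
  | of c k => rw [spFC_of]; exact GP.of_commute (Λ.adj_symm c.2) k g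
  | one => rw [map_one]; exact Commute.one_left _
  | mul a b ha hb => rw [map_mul]; exact ha.mul_left hb

/-- The map from `B` back into the graph product. -/
noncomputable def spFB : spB Λ G v →* GP Λ G :=
  MonoidHom.noncommCoprod (spFC Λ G v) (GP.of Λ G v) (spFC_comm Λ G v)

theorem spFB_apply (b : spB Λ G v) :
    spFB Λ G v b = spFC Λ G v b.1 * GP.of Λ G v b.2 := rfl

theorem spFB_mem (b : spB Λ G v) : spFB Λ G v b ∈ WS Λ G (insert v {w | Λ.Adj v w}) := by
  rw [spFB_apply]
  refine mul_mem ?_ (of_mem_WS (Set.mem_insert v _) b.2)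
  exact WS_mono (Set.subset_insert _ _) (spFC_mem Λ G v b.1)

/-- The family of maps from the two sides back to the graph product. -/
noncomputable def spF : ∀ i : Bool, spK Λ G v i →* GP Λ G := fun i => by
  cases i with
  | false => exact spFA Λ G v
  | true => exact spFB Λ G v

/-- The map from the pushout back to the graph product. -/
noncomputable def spPsi : PushoutI (spφ Λ G v) →* GP Λ G :=
  PushoutI.lift (spF Λ G v) (spFC Λ G v)
    (by
      intro i
      match i with
      | false =>
        refine GP.hom_ext fun c => ?_
        ext g
        simp only [MonoidHom.comp_apply]
        show spFA Λ G v (spCA Λ G v (GP.of (spLC Λ v) (spG G) c g))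
          = spFC Λ G v (GP.of (spLC Λ v) (spG G) c g)
        rw [spCA_of, spFA_of, spFC_of]
      | true =>
        exact MonoidHom.noncommCoprod_comp_inl (spFC Λ G v) (GP.of Λ G v) (spFC_comm Λ G v))

theorem spPsi_of_false (a : spA Λ G v) :
    spPsi Λ G v (of (φ := spφ Λ G v) false a) = spFA Λ G v a := by
  rw [spPsi, PushoutI.lift_of]
  rfl

theorem spPsi_of_true (b : spB Λ G v) :
    spPsi Λ G v (of (φ := spφ Λ G v) true b) = spFB Λ G v b := by
  rw [spPsi, PushoutI.lift_of]
  rfl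

theorem spPsi_base (c : spC Λ G v) :
    spPsi Λ G v (base (spφ Λ G v) c) = spFC Λ G v c := by
  rw [spPsi, PushoutI.lift_base]

theorem spPsi_spTheta (x : GP Λ G) : spPsi Λ G v (spTheta Λ G v x) = x := by
  have h : (spPsi Λ G v).comp (spTheta Λ G v) = MonoidHom.id _ := by
    refine GP.hom_ext fun u => ?_
    ext g
    simp only [MonoidHom.comp_apply, MonoidHom.id_apply]
    by_cases hu : u = v
    · subst hu
      rw [spTheta_of_v, spPsi_of_true, spFB_apply]
      show spFC Λ G u 1 * GP.of Λ G u g = _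
      rw [map_one, one_mul]
    · rw [spTheta_of_ne Λ G v hu, spPsi_of_false, spFA_of]
  have := DFunLike.congr_fun h x
  simpa using this

theorem spTheta_mem_of_false {S : Set V} (hS : v ∉ S) {x : GP Λ G} (hx : x ∈ WS Λ G S) :
    spTheta Λ G v x ∈ (of (φ := spφ Λ G v) false).range := by
  refine WS_map_le _ (fun u hu g => ?_) x hx
  have huv : u ≠ v := fun h => hS (h ▸ hu)
  rw [spTheta_of_ne Λ G v huv]
  exact ⟨_, rfl⟩

theorem spTheta_mem_of_true {x : GP Λ G} (hx : x ∈ WS Λ G (insert v {w | Λ.Adj v w})) :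
    spTheta Λ G v x ∈ (of (φ := spφ Λ G v) true).range := by
  refine WS_map_le _ (fun u hu g => ?_) x hx
  rcases hu with rfl | hu
  · rw [spTheta_of_v]; exact ⟨_, rfl⟩
  · have huv : u ≠ v := hu.ne'
    rw [spTheta_of_ne Λ G v huv, sp_key Λ G v u hu huv g]
    exact ⟨_, rfl⟩

end Splitting
section SuppFacts

open Monoid Monoid.PushoutI

variable {V : Type} [Fintype V] {Λ : SimpleGraph V} {G : V → Type} [∀ v, Group (G v)]

theorem supp_subset {S : Set V} {x : GP Λ G} (hx : x ∈ WS Λ G S) : supp Λ G x ⊆ S :=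
  Set.sInter_subset_of_mem hx

theorem mem_WS_supp (x : GP Λ G) : x ∈ WS Λ G (supp Λ G x) := by
  classical
  have key : ∀ F : Finset (Set V), (∀ S ∈ F, x ∈ WS Λ G S) →
      x ∈ WS Λ G (Set.univ ∩ ⋂₀ (↑F : Set (Set V))) := by
    intro F
    induction F using Finset.induction_on with
    | empty => intro _; simpa [WS_univ] using Subgroup.mem_top x
    | insert _ _ hAF ih =>
      rename_i A F'
      intro h
      have h1 : x ∈ WS Λ G (Set.univ ∩ ⋂₀ (↑F' : Set (Set V))) :=
        ih fun S hS => h S (Finset.mem_insert_of_mem hS)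
      have h2 : x ∈ WS Λ G A := h A (Finset.mem_insert_self _ _)
      have h3 := mem_WS_inter h2 h1
      have hset : A ∩ (Set.univ ∩ ⋂₀ (↑F' : Set (Set V)))
          = Set.univ ∩ ⋂₀ (↑(insert A F') : Set (Set V)) := by
        ext t
        simp only [Set.mem_inter_iff, Set.mem_sInter, Set.mem_univ, true_and,
          Finset.coe_insert, Set.mem_insert_iff]
        constructor
        · rintro ⟨hA, hF⟩ s hs
          rcases hs with rfl | hs
          · exact hA
          · exact hF s hs
        · intro h
          exact ⟨h A (Or.inl rfl), fun s hs => h s (Or.inr hs)⟩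
      rwa [hset] at h3
  have hfam : (↑(Set.toFinite {S : Set V | x ∈ WS Λ G S}).toFinset : Set (Set V))
      = {S : Set V | x ∈ WS Λ G S} := Set.Finite.coe_toFinset _
  have := key (Set.toFinite {S : Set V | x ∈ WS Λ G S}).toFinset
    (fun S hS => by rwa [Set.Finite.mem_toFinset] at hS)
  rw [hfam] at this
  have hsupp : supp Λ G x = Set.univ ∩ ⋂₀ {S : Set V | x ∈ WS Λ G S} := by
    rw [supp]
    ext t
    simp
  rwa [← hsupp] at this

theorem spφ_true_apply (v : V) (z : spC Λ G v) :
    spφ Λ G v true z = (MonoidHom.inl (spC Λ G v) (G v)) z := rfl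

theorem spφ_false_apply (v : V) (z : spC Λ G v) :
    spφ Λ G v false z = spCA Λ G v z := rfl

theorem spFA_spCA (v : V) (z : spC Λ G v) :
    spFA Λ G v (spCA Λ G v z) = spFC Λ G v z := by
  induction z using GP.induction_on with
  | of c g => rw [spCA_of, spFA_of, spFC_of]
  | one => simp
  | mul a b ha hb => rw [map_mul, map_mul, map_mul, ha, hb]

/-- Key lemma: if `x` is supported in a clique and `u ∈ supp x`, then any conjugate
of `x` lying in `WS S` forces `u ∈ S`. -/
theorem conj_supp_mem {Δ : Set V} (hclique : Λ.IsClique Δ) {x : GP Λ G}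
    (hxΔ : x ∈ WS Λ G Δ) {u : V} (hu : u ∈ supp Λ G x) (k : GP Λ G) {S : Set V}
    (hk : k * x * k⁻¹ ∈ WS Λ G S) : u ∈ S := by
  classical
  by_contra hus
  have hsubΔ : supp Λ G x ⊆ Δ := supp_subset hxΔ
  have hstar : supp Λ G x ⊆ insert u {w | Λ.Adj u w} := by
    intro w hw
    rcases eq_or_ne w u with rfl | hne
    · exact Set.mem_insert _ _
    · exact Set.mem_insert_of_mem _ (hclique (hsubΔ hu) (hsubΔ hw) hne.symm)
  have hxstar : x ∈ WS Λ G (insert u {w | Λ.Adj u w}) :=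
    WS_mono hstar (mem_WS_supp x)
  obtain ⟨x₀', hx₀'⟩ := spTheta_mem_of_true Λ G u hxstar
  let x₁ : spB Λ G u := x₀'
  have hx₀ : of (φ := spφ Λ G u) true x₁ = spTheta Λ G u x := hx₀'
  have hxPsi : spFB Λ G u x₁ = x := by
    rw [← spPsi_of_true, hx₀, spPsi_spTheta]
  have hx₀2 : x₁.2 ≠ 1 := by
    intro h1
    have hx₀eq : x₁ = ((x₁.1, (1 : G u)) : spB Λ G u) := by
      rw [← h1]
      exact Prod.mk.eta.symm
    have hxval : x = spFC Λ G u x₁.1 := by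
      rw [← hxPsi, hx₀eq]
      show spFC Λ G u x₁.1 * GP.of Λ G u 1 = spFC Λ G u x₁.1
      rw [map_one, mul_one]
    have hsupp : supp Λ G x ⊆ {w | Λ.Adj u w} :=
      supp_subset (hxval ▸ spFC_mem Λ G u x₁.1)
    exact Λ.irrefl (hsupp hu)
  have Hx : ∀ c : spB Λ G u, c * x₁ * c⁻¹ ∉ (spφ Λ G u true).range := by
    rintro c ⟨z, hz⟩
    rw [spφ_true_apply] at hz
    apply hx₀2
    have hsnd := congr_arg Prod.snd hz
    simp only [Prod.snd_mul, Prod.snd_inv] at hsnd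
    have h1 : (1 : G u) = c.2 * x₁.2 * c.2⁻¹ := hsnd
    have h2 := congr_arg (fun t => c.2⁻¹ * t * c.2) h1
    simpa [mul_assoc] using h2.symm
  obtain ⟨y', hy'⟩ := spTheta_mem_of_false Λ G u (S := S) hus hk
  let y : spA Λ G u := y'
  have hy : of (φ := spφ Λ G u) false y = spTheta Λ G u (k * x * k⁻¹) := hy'
  have heq : spTheta Λ G u k * of (φ := spφ Λ G u) true x₁ * (spTheta Λ G u k)⁻¹
      = of (φ := spφ Λ G u) false y := by
    rw [hx₀, ← map_inv, ← map_mul, ← map_mul]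
    exact hy.symm
  obtain ⟨⟨b', hb'⟩, h2⟩ := pushout_conj_mem (spφ_injective Λ G u)
    (j₀ := true) (x₀ := x₁) Hx heq
  let b : spB Λ G u := b'
  have hb : of (φ := spφ Λ G u) true b = spTheta Λ G u k := hb'
  have hinf : of (φ := spφ Λ G u) false y ∈
      (of (φ := spφ Λ G u) false).range ⊓ (of (φ := spφ Λ G u) true).range :=
    ⟨⟨y, rfl⟩, h2⟩
  rw [inf_of_range_eq_base_range (spφ_injective Λ G u) (by simp : (false : Bool) ≠ true)]
    at hinf
  obtain ⟨c, hc⟩ := hinf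
  have h5 : spTheta Λ G u (k * x * k⁻¹) = base (spφ Λ G u) c := hy.symm.trans hc.symm
  have hkxk : k * x * k⁻¹ = spFC Λ G u c := by
    rw [← spPsi_spTheta Λ G u (k * x * k⁻¹), h5, spPsi_base]
  have hk' : k = spFB Λ G u b := by
    rw [← spPsi_spTheta Λ G u k, ← hb, spPsi_of_true]
  have hb2 : b⁻¹ * ((c, (1 : G u)) : spB Λ G u) * b
      = ((b.1⁻¹ * c * b.1 : spC Λ G u), (1 : G u)) := by
    rw [Prod.ext_iff]
    constructor
    · rfl
    · show b.2⁻¹ * 1 * b.2 = 1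
      group
  have hxC : x = spFC Λ G u (b.1⁻¹ * c * b.1) := by
    have hx' : x = k⁻¹ * (k * x * k⁻¹) * k := by group
    rw [hx', hkxk, hk']
    have h3 : spFC Λ G u c = spFB Λ G u ((c, (1 : G u)) : spB Λ G u) := by
      show _ = spFC Λ G u c * GP.of Λ G u 1
      rw [map_one, mul_one]
    rw [h3, ← map_inv, ← map_mul, ← map_mul, hb2]
    rw [spFB_apply, map_one, mul_one]
  have hsupp : supp Λ G x ⊆ {w | Λ.Adj u w} :=
    supp_subset (hxC ▸ spFC_mem Λ G u _)
  exact Λ.irrefl (hsupp hu)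

/-- Key lemma: a centralizing element avoids vertices that are neither in the support
nor adjacent to all of it. -/
theorem cent_bad {x : GP Λ G} (hx : ∃ Δ : Set V, Λ.IsClique Δ ∧ x ∈ WS Λ G Δ)
    {v u₀ : V} (hv : v ∉ supp Λ G x) (hu₀ : u₀ ∈ supp Λ G x) (hnadj : ¬Λ.Adj v u₀)
    {w : GP Λ G} (hw : w * x * w⁻¹ = x) : w ∈ WS Λ G {t | t ≠ v} := by
  classical
  obtain ⟨Δ, hclique, hxΔ⟩ := hx
  have hxA : x ∈ WS Λ G {t | t ≠ v} := by
    refine WS_mono ?_ (mem_WS_supp x)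
    intro t ht h
    exact hv (h ▸ ht)
  obtain ⟨x₀', hx₀'⟩ := spTheta_mem_of_false Λ G v (S := {t | t ≠ v})
    (by simp : v ∉ {t : V | t ≠ v}) hxA
  let x₀ : spA Λ G v := x₀'
  have hx₀ : of (φ := spφ Λ G v) false x₀ = spTheta Λ G v x := hx₀'
  have hxPsi : spFA Λ G v x₀ = x := by
    rw [← spPsi_of_false, hx₀, spPsi_spTheta]
  have Hx : ∀ c : spA Λ G v, c * x₀ * c⁻¹ ∉ (spφ Λ G v false).range := by
    rintro c ⟨z, hz⟩
    rw [spφ_false_apply] at hz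
    have happ := congr_arg (spFA Λ G v) hz
    rw [map_mul, map_mul, map_inv, hxPsi, spFA_spCA] at happ
    have hmem : spFA Λ G v c * x * (spFA Λ G v c)⁻¹ ∈ WS Λ G {t | Λ.Adj v t} :=
      happ ▸ spFC_mem Λ G v z
    exact hnadj (conj_supp_mem hclique hxΔ hu₀ (spFA Λ G v c) hmem)
  have heq : spTheta Λ G v w * of (φ := spφ Λ G v) false x₀ * (spTheta Λ G v w)⁻¹
      = of (φ := spφ Λ G v) false x₀ := by
    rw [hx₀, ← map_inv, ← map_mul, ← map_mul, hw]
  obtain ⟨⟨a, ha⟩, -⟩ := pushout_conj_mem (spφ_injective Λ G v)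
    (j₀ := false) (x₀ := x₀) Hx heq
  have hwA : w = spFA Λ G v a := by
    rw [← spPsi_spTheta Λ G v w, ← ha, spPsi_of_false]
  rw [hwA]
  exact spFA_mem Λ G v a

end SuppFacts
/-- The centralizer of a CP element `x` of a graph product of
directly-indecomposable cyclic groups is `W(star(x))`, where `star(x)` consists
of `supp(x)` together with all vertices adjacent to every vertex of `supp(x)`. -/
theorem centralizer_of_CP_element
    {V : Type} [Fintype V] [Nonempty V] (Λ : SimpleGraph V)
    (G : V → Type) [∀ v, Group (G v)] [∀ v, Nontrivial (G v)]
    (hG : ∀ v, DICyclic (G v))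
    (x : GP Λ G) (hx : ∃ Δ : Set V, Λ.IsClique Δ ∧ x ∈ WS Λ G Δ) :
    Subgroup.centralizer {x} =
      WS Λ G (supp Λ G x ∪ {v : V | ∀ u ∈ supp Λ G x, Λ.Adj v u}) := by
  classical
  obtain ⟨Δ, hclique, hxΔ⟩ := hx
  set Sx : Set V := supp Λ G x with hSx
  set star : Set V := Sx ∪ {v : V | ∀ u ∈ Sx, Λ.Adj v u} with hstar
  have hsupp_clique : Λ.IsClique Sx := hclique.subset (supp_subset hxΔ)
  apply le_antisymm
  · -- centralizer ≤ WS star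
    intro w hw
    have hcomm : x * w = w * x := (Subgroup.mem_centralizer_iff.mp hw) x rfl
    have hconj : w * x * w⁻¹ = x := by
      rw [← hcomm]
      group
    have hbad : ∀ v : V, v ∉ star → w ∈ WS Λ G {t | t ≠ v} := by
      intro v hv
      have hv1 : v ∉ Sx := fun h => hv (Or.inl h)
      have hv2 : ¬∀ u ∈ Sx, Λ.Adj v u := fun h => hv (Or.inr h)
      push_neg at hv2
      obtain ⟨u₀, hu₀, hnadj⟩ := hv2
      exact cent_bad ⟨Δ, hclique, hxΔ⟩ hv1 hu₀ hnadj hconj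
    have key : ∀ F : Finset V, (∀ v ∈ F, w ∈ WS Λ G {t | t ≠ v}) →
        w ∈ WS Λ G {t | t ∉ F} := by
      intro F
      induction F using Finset.induction_on with
      | empty =>
        intro _
        have h1 : {t : V | t ∉ (∅ : Finset V)} = Set.univ := by
          ext t; simp
        rw [h1, WS_univ]
        exact Subgroup.mem_top w
      | insert _ _ hAF ih =>
        rename_i a F'
        intro h
        have h1 : w ∈ WS Λ G {t | t ∉ F'} := ih fun v hv => h v (Finset.mem_insert_of_mem hv)
        have h2 : w ∈ WS Λ G {t | t ≠ a} := h a (Finset.mem_insert_self _ _)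
        have h3 := mem_WS_inter h2 h1
        have hset : {t : V | t ≠ a} ∩ {t : V | t ∉ F'} = {t : V | t ∉ insert a F'} := by
          ext t
          simp [not_or]
        rwa [hset] at h3
    have hF := key (Finset.univ.filter (fun v => v ∉ star))
      (fun v hv => hbad v (by simpa using (Finset.mem_filter.mp hv).2))
    have hseteq : {t : V | t ∉ Finset.univ.filter (fun v => v ∉ star)} = star := by
      ext t
      simp [Finset.mem_filter]
    rwa [hseteq] at hF
  · -- WS star ≤ centralizer
    rw [WS_le_iff]
    intro v hv g
    rw [Subgroup.mem_centralizer_iff]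
    intro y hy
    rw [show y = x from hy]
    -- goal : x * of v g = of v g * x
    have hle : WS Λ G Sx ≤ Subgroup.centralizer {GP.of Λ G v g} := by
      rw [WS_le_iff]
      intro u hu k
      rw [Subgroup.mem_centralizer_iff]
      intro z hz
      rw [show z = GP.of Λ G v g from hz]
      -- goal : of v g * of u k = of u k * of v g
      have hcomm : Commute (GP.of Λ G v g) (GP.of Λ G u k) := by
        rcases hv with hvS | hvL
        · rcases eq_or_ne v u with rfl | hne
          · letI : IsCyclic (G v) := (hG v).1
            letI : CommGroup (G v) := IsCyclic.commGroup
            have h1 : g * k = k * g := mul_comm g k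
            show _ = _
            rw [← map_mul, ← map_mul, h1]
          · exact GP.of_commute (hsupp_clique hvS hu hne) g k
        · exact GP.of_commute (hvL u hu) g k
      exact hcomm
    have hxin : x ∈ Subgroup.centralizer {GP.of Λ G v g} := hle (mem_WS_supp x)
    exact ((Subgroup.mem_centralizer_iff.mp hxin) (GP.of Λ G v g) rfl).symm
end

section
/- For any labeled-graph (Λ, 𝒢), the T₀-quotient graph Λ₀ satisfies the T₀ property: every equivalence class of vertices of Λ₀ under the relation ∼_{Λ₀} is a singleton. -/
open Monoid

open scoped commutatorElement

section T0Aux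

variable {V : Type} (Λ : SimpleGraph V)

private lemma exists_max_clique (s : Set V) (hs : Λ.IsClique s) :
    ∃ t, s ⊆ t ∧ Maximal Λ.IsClique t := by
  have := zorn_subset_nonempty {t : Set V | Λ.IsClique t}
    (fun c hc hchain _ => by
      refine ⟨⋃₀ c, ?_, fun s hs => Set.subset_sUnion_of_mem hs⟩
      intro x hx y hy hxy
      obtain ⟨sx, hsx, hxsx⟩ := hx
      obtain ⟨sy, hsy, hysy⟩ := hy
      rcases hchain.total hsx hsy with h | h
      · exact hc hsy (h hxsx) hysy hxy
      · exact hc hsx hxsx (h hysy) hxy) s hs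
  obtain ⟨m, hsm, hm⟩ := this
  exact ⟨m, hsm, hm⟩

private lemma class_adj {u u' : V}
    (h : ∀ s : Set V, Maximal Λ.IsClique s → (u ∈ s ↔ u' ∈ s)) (hne : u ≠ u') :
    Λ.Adj u u' := by
  obtain ⟨t, hst, hmax⟩ := exists_max_clique Λ {u} (Λ.isClique_singleton u)
  have hu : u ∈ t := hst rfl
  have hu' : u' ∈ t := (h t hmax).mp hu
  exact hmax.1 hu hu' hne

private lemma adj_inv {u u' v : V}
    (h : ∀ s : Set V, Maximal Λ.IsClique s → (u ∈ s ↔ u' ∈ s))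
    (hadj : Λ.Adj u v) (hne : u' ≠ v) : Λ.Adj u' v := by
  obtain ⟨t, hst, hmax⟩ := exists_max_clique Λ {u, v}
    (SimpleGraph.isClique_pair.mpr (fun _ => hadj))
  have hu : u ∈ t := hst (Set.mem_insert _ _)
  have hv : v ∈ t := hst (Set.mem_insert_of_mem _ rfl)
  exact hmax.1 ((h t hmax).mp hu) hv hne

end T0Aux

/-- The `T₀`-quotient graph satisfies the `T₀` property: every `∼`-class of
vertices of `Λ₀` is a singleton. -/
theorem t0_quotient_satisfies_t0
    {V : Type} [Fintype V] [Nonempty V] (Λ : SimpleGraph V)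
    (G : V → Type) [∀ v, Group (G v)] [∀ v, Nontrivial (G v)] :
    ∀ a b : Quotient (simSetoid Λ),
      (∀ s : Set (Quotient (simSetoid Λ)), Maximal (T0Q Λ).IsClique s → (a ∈ s ↔ b ∈ s)) →
        a = b := by
  
  intro a b h
  obtain ⟨u, rfl⟩ := Quotient.exists_rep a
  obtain ⟨v, rfl⟩ := Quotient.exists_rep b
  apply Quotient.sound
  intro s hs
  have hsat : ∀ w w' : V, Quotient.mk (simSetoid Λ) w = Quotient.mk (simSetoid Λ) w' →
      w ∈ s → w' ∈ s := fun w w' hr hw => (Quotient.exact hr s hs).mp hw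
  set t : Set (Quotient (simSetoid Λ)) := Quotient.mk (simSetoid Λ) '' s with ht
  have htcl : (T0Q Λ).IsClique t := by
    rintro a ⟨x, hx, rfl⟩ b ⟨y, hy, rfl⟩ hab
    exact ⟨hab, x, y, rfl, rfl, hs.1 hx hy (fun e => hab (by rw [e]))⟩
  have htmax : Maximal (T0Q Λ).IsClique t := by
    refine ⟨htcl, fun t' ht' hsub c hc => ?_⟩
    have hs'cl : Λ.IsClique {w | Quotient.mk (simSetoid Λ) w ∈ t'} := by
      intro w hw w' hw' hne
      by_cases hq : Quotient.mk (simSetoid Λ) w = Quotient.mk (simSetoid Λ) w'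
      · exact class_adj Λ (Quotient.exact hq) hne
      · obtain ⟨_, x, y, hx, hy, hadj⟩ := ht' hw hw' hq
        have h1 : Λ.Adj w y := adj_inv Λ (Quotient.exact hx) hadj
          (fun e => hq (by rw [e, hy]))
        exact (adj_inv Λ (Quotient.exact hy) h1.symm hne.symm).symm
    have hsub2 : s ⊆ {w | Quotient.mk (simSetoid Λ) w ∈ t'} :=
      fun w hw => hsub ⟨w, hw, rfl⟩
    obtain ⟨w, rfl⟩ := Quotient.exists_rep c
    exact ⟨w, hs.2 hs'cl hsub2 hc, rfl⟩
  have key := h t htmax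
  constructor
  · intro hu
    obtain ⟨x, hx, hxe⟩ := key.mp ⟨u, hu, rfl⟩
    exact hsat x v hxe hx
  · intro hv
    obtain ⟨x, hx, hxe⟩ := key.mpr ⟨v, hv, rfl⟩
    exact hsat x u hxe hx
end

section
/- Let (Γ, 𝒢_Γ) and (Σ, 𝒢_Σ) be labeled-graphs in which Γ and Σ are complete graphs and every vertex group is a primary cyclic group, with chosen generators x_u of G_u for u ∈ V_Γ. If τ : W(Γ, 𝒢_Γ) → W(Σ, 𝒢_Σ) is a group isomorphism, then there exists a labeled-graph isomorphism t : (Γ, 𝒢_Γ) → (Σ, 𝒢_Σ) such that for every u ∈ V_Γ, the vertex t(u) lies in the support supp(τ(x_u)). -/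
open Monoid

open scoped commutatorElement

open Function Subgroup

section CyclicHelpers

variable {α : Type} [Group α]

lemma orderOf_eq_natCard_of_zpowers_top {g : α} (h : Subgroup.zpowers g = ⊤) :
    orderOf g = Nat.card α := by
  rw [← Nat.card_zpowers, h]
  exact Nat.card_congr Subgroup.topEquiv.toEquiv

lemma isCyclic_of_zpowers_top {g : α} (h : Subgroup.zpowers g = ⊤) : IsCyclic α :=
  ⟨⟨g, fun a => by
    have : a ∈ zpowers g := by rw [h]; trivial
    exact this⟩⟩

lemma exists_pow_eq_root {p m k : ℕ} (hcyc : IsCyclic α) (hp : p.Prime)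
    (hcard : Nat.card α = p ^ m) (hkm : k ≤ m) {c : α} (hc : c ^ p ^ k = 1) :
    ∃ d : α, d ^ p ^ (m - k) = c := by
  have hfin : Finite α := (Nat.card_pos_iff.mp (hcard ▸ pow_pos hp.pos m)).2
  obtain ⟨g, hg⟩ := hcyc.exists_generator
  have hgtop : Subgroup.zpowers g = ⊤ := (Subgroup.eq_top_iff' _).mpr hg
  have horder : orderOf g = p ^ m := by
    rw [orderOf_eq_natCard_of_zpowers_top hgtop, hcard]
  obtain ⟨t, ht⟩ := Submonoid.mem_powers_iff _ _ |>.mp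
    (mem_powers_iff_mem_zpowers.mpr (hg c))
  have hdvd : p ^ m ∣ t * p ^ k := by
    rw [← horder, orderOf_dvd_iff_pow_eq_one, pow_mul, ht, hc]
  have hdvd2 : p ^ (m - k) ∣ t := by
    have heq : p ^ (m - k) * p ^ k = p ^ m := by
      rw [← pow_add, Nat.sub_add_cancel hkm]
    rw [← heq] at hdvd
    exact (Nat.mul_dvd_mul_iff_right (pow_pos hp.pos k)).mp hdvd
  obtain ⟨r, rfl⟩ := hdvd2
  exact ⟨g ^ r, by rw [← pow_mul, mul_comm r, ht]⟩

lemma coord_in_pow {β : Type} [Group β] (hcyc : IsCyclic β)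
    {q m p n : ℕ} (hq : q.Prime) (hp : p.Prime) (hcard : Nat.card β = q ^ m)
    (hn : 1 ≤ n) {c : β} (hc : c ^ p ^ n = 1) (hne : Nat.card β = p ^ n → c = 1) :
    ∃ e : β, c ^ p ^ (n - 1) = e ^ p ^ n := by
  by_cases hqp : q = p
  · subst hqp
    rcases lt_trichotomy m n with hmn | hmn | hmn
    · refine ⟨1, ?_⟩
      rw [one_pow]
      have h1 : orderOf c ∣ q ^ m := hcard ▸ orderOf_dvd_natCard c
      exact orderOf_dvd_iff_pow_eq_one.mp (h1.trans (pow_dvd_pow q (by omega)))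
    · rw [hne (by rw [hcard, hmn])]
      exact ⟨1, by simp⟩
    · obtain ⟨d, hd⟩ := exists_pow_eq_root hcyc hq hcard hmn.le hc
      refine ⟨d ^ q ^ (m - 1 - n), ?_⟩
      have hexp : m - n + (n - 1) = m - 1 - n + n := by omega
      rw [← hd, ← pow_mul, ← pow_mul, ← pow_add, ← pow_add, hexp]
  · have h1 : orderOf c ∣ q ^ m := hcard ▸ orderOf_dvd_natCard c
    have h2 : orderOf c ∣ p ^ n := orderOf_dvd_iff_pow_eq_one.mpr hc
    have hco : Nat.Coprime (q ^ m) (p ^ n) :=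
      Nat.Coprime.pow _ _ ((Nat.coprime_primes hq hp).mpr hqp)
    have hc1 : c = 1 := orderOf_eq_one_iff.mp
      (Nat.dvd_one.mp (hco ▸ Nat.dvd_gcd h1 h2))
    exact ⟨1, by simp [hc1]⟩

end CyclicHelpers

section Matching

variable {V W : Type} [Fintype V] [Fintype W] [DecidableEq V] [DecidableEq W]
  {G : V → Type} {H : W → Type} [∀ v, CommGroup (G v)] [∀ w, CommGroup (H w)]

open scoped Classical in
theorem class_card_le
    (x : ∀ v, G v) (hx : ∀ v, Subgroup.zpowers (x v) = ⊤)
    (hH : ∀ w, IsCyclic (H w) ∧ ∃ p n : ℕ, p.Prime ∧ Nat.card (H w) = p ^ n)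
    (θ : (∀ v, G v) ≃* (∀ w, H w))
    {p n : ℕ} (hp : p.Prime) (hn : 1 ≤ n)
    (s : Finset V) (hs : ∀ u ∈ s, Nat.card (G u) = p ^ n) :
    s.card ≤ (s.biUnion (fun u => Finset.univ.filter (fun w =>
      Nat.card (H w) = Nat.card (G u) ∧ θ (Pi.mulSingle u (x u)) w ≠ 1))).card := by
  classical
  haveI : NeZero p := ⟨hp.ne_zero⟩
  set N := s.biUnion (fun u => Finset.univ.filter (fun w =>
      Nat.card (H w) = Nat.card (G u) ∧ θ (Pi.mulSingle u (x u)) w ≠ 1)) with hN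
  have horder : ∀ u ∈ s, orderOf (x u) = p ^ n := fun u hu => by
    rw [orderOf_eq_natCard_of_zpowers_top (hx u), hs u hu]
  have hsingle_pow : ∀ u ∈ s, ∀ w : W, (θ (Pi.mulSingle u (x u)) w) ^ p ^ n = 1 := by
    intro u hu w
    have h1 : (Pi.mulSingle u (x u) : ∀ v, G v) ^ p ^ n = 1 := by
      rw [← Pi.mulSingle_pow, ← horder u hu, pow_orderOf_eq_one, Pi.mulSingle_one]
    rw [← Pi.pow_apply, ← map_pow, h1, map_one, Pi.one_apply]
  set a : ((u : ↥s) → ZMod p) → (∀ v, G v) := fun k v =>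
    if h : v ∈ s then (x v) ^ (p ^ (n - 1) * (k ⟨v, h⟩).val) else 1 with ha
  have ha_prod : ∀ k, a k = ∏ u ∈ s.attach,
      Pi.mulSingle (u : V) ((x u) ^ (p ^ (n - 1) * (k u).val)) := by
    intro k
    funext v
    rw [Finset.prod_apply]
    by_cases hv : v ∈ s
    · rw [Finset.prod_eq_single (⟨v, hv⟩ : ↥s)]
      · simp [ha, hv]
      · intro b _ hb
        exact Pi.mulSingle_eq_of_ne (fun hbv => hb (Subtype.ext hbv.symm)) _
      · intro habs
        exact absurd (Finset.mem_attach _ _) habs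
    · rw [show a k v = 1 from dif_neg hv]
      exact (Finset.prod_eq_one fun b _ =>
        Pi.mulSingle_eq_of_ne (fun h => hv (by rw [h]; exact b.2)) _).symm
  have ha_pow : ∀ k, (a k) ^ p = 1 := by
    intro k
    funext v
    simp only [Pi.pow_apply, Pi.one_apply]
    by_cases hv : v ∈ s
    · rw [show a k v = _ from dif_pos hv, ← pow_mul]
      apply orderOf_dvd_iff_pow_eq_one.mp
      rw [horder v hv]
      have hpn : p ^ n = p ^ (n - 1) * p := by
        rw [← pow_succ]; congr 1; omega
      rw [hpn]
      exact mul_dvd_mul (dvd_mul_right _ _) dvd_rfl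
    · rw [show a k v = 1 from dif_neg hv, one_pow]
  have hθpow : ∀ k (w : W), (θ (a k) w) ^ p = 1 := fun k w => by
    rw [← Pi.pow_apply, ← map_pow, ha_pow, map_one, Pi.one_apply]
  have hout : ∀ k (w : W), w ∉ N →
      θ (a k) w ∈ (powMonoidHom (p ^ n) : H w →* H w).range := by
    intro k w hw
    rw [ha_prod k, map_prod, Finset.prod_apply]
    apply Subgroup.prod_mem
    intro u _
    rw [Pi.mulSingle_pow, map_pow, Pi.pow_apply, pow_mul]
    apply Subgroup.pow_mem
    set c := θ (Pi.mulSingle (u : V) (x u)) w with hcdef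
    have hc : c ^ p ^ n = 1 := hsingle_pow u u.2 w
    obtain ⟨hcyc, q, m, hq, hcard⟩ := hH w
    have hne : Nat.card (H w) = p ^ n → c = 1 := by
      intro hcd
      by_contra hc1
      exact hw (Finset.mem_biUnion.mpr ⟨u, u.2, Finset.mem_filter.mpr
        ⟨Finset.mem_univ w, by rw [hcd, hs u u.2], hc1⟩⟩)
    obtain ⟨e, he⟩ := coord_in_pow hcyc hq hp hcard hn hc hne
    exact ⟨e, by rw [powMonoidHom_apply, he]⟩
  set T : ↥N → Type := fun w => {h : H w.1 // h ^ p = 1} with hT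
  set F : ((u : ↥s) → ZMod p) → ((w : ↥N) → T w) :=
    fun k w => ⟨θ (a k) w.1, hθpow k w.1⟩ with hF
  have hFinj : Function.Injective F := by
    intro k k' hFkk'
    by_contra hkk'
    obtain ⟨u₀, hu₀⟩ : ∃ u₀, k u₀ ≠ k' u₀ := by
      by_contra hcon; push_neg at hcon; exact hkk' (funext hcon)
    have hb : ∀ w : W, ∃ e : H w, θ (a k) w * (θ (a k') w)⁻¹ = e ^ p ^ n := by
      intro w
      by_cases hw : w ∈ N
      · have h1 : F k ⟨w, hw⟩ = F k' ⟨w, hw⟩ := congrFun hFkk' ⟨w, hw⟩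
        have heq : θ (a k) w = θ (a k') w := congrArg Subtype.val h1
        exact ⟨1, by rw [heq, mul_inv_cancel, one_pow]⟩
      · obtain ⟨e1, he1⟩ := hout k w hw
        obtain ⟨e2, he2⟩ := hout k' w hw
        rw [powMonoidHom_apply] at he1 he2
        refine ⟨e1 * e2⁻¹, ?_⟩
        rw [mul_pow, inv_pow, he1, he2]
    choose e he using hb
    have hbe : θ (a k) * (θ (a k'))⁻¹ = e ^ p ^ n := by
      funext w
      rw [Pi.mul_apply, Pi.inv_apply, Pi.pow_apply]
      exact he w
    have hae : a k * (a k')⁻¹ = (θ.symm e) ^ p ^ n := by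
      have h2 := congrArg θ.symm hbe
      rwa [map_mul, map_inv, map_pow, MulEquiv.symm_apply_apply,
        MulEquiv.symm_apply_apply] at h2
    have hcoord := congrFun hae (u₀ : V)
    have hu0s : (u₀ : V) ∈ s := u₀.2
    rw [Pi.mul_apply, Pi.inv_apply, Pi.pow_apply] at hcoord
    rw [show a k (u₀ : V) = _ from dif_pos hu0s,
      show a k' (u₀ : V) = _ from dif_pos hu0s] at hcoord
    have hrhs : ((θ.symm e) (u₀ : V)) ^ p ^ n = 1 := by
      apply orderOf_dvd_iff_pow_eq_one.mp
      rw [← hs _ hu0s]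
      exact orderOf_dvd_natCard _
    rw [hrhs] at hcoord
    have hxeq : x (u₀ : V) ^ (p ^ (n - 1) * (k ⟨(u₀ : V), hu0s⟩).val)
        = x (u₀ : V) ^ (p ^ (n - 1) * (k' ⟨(u₀ : V), hu0s⟩).val) :=
      mul_inv_eq_one.mp hcoord
    rw [pow_eq_pow_iff_modEq, horder _ hu0s] at hxeq
    have hpn : p ^ n = p ^ (n - 1) * p := by rw [← pow_succ]; congr 1; omega
    rw [hpn] at hxeq
    have hmod := Nat.ModEq.mul_left_cancel' (pow_ne_zero (n - 1) hp.ne_zero) hxeq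
    have hval : (k ⟨(u₀ : V), hu0s⟩).val = (k' ⟨(u₀ : V), hu0s⟩).val := by
      have hl1 : (k ⟨(u₀ : V), hu0s⟩).val < p := ZMod.val_lt _
      have hl2 : (k' ⟨(u₀ : V), hu0s⟩).val < p := ZMod.val_lt _
      unfold Nat.ModEq at hmod
      rwa [Nat.mod_eq_of_lt hl1, Nat.mod_eq_of_lt hl2] at hmod
    have : k ⟨(u₀ : V), hu0s⟩ = k' ⟨(u₀ : V), hu0s⟩ := ZMod.val_injective p hval
    exact hu₀ (by simpa using this)
  haveI hfinH : ∀ w : W, Finite (H w) := fun w => by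
    obtain ⟨_, q, m, hq, hcard⟩ := hH w
    exact (Nat.card_pos_iff.mp (hcard ▸ pow_pos hq.pos m)).2
  have hcard1 : Nat.card ((u : ↥s) → ZMod p) = p ^ s.card := by
    rw [Nat.card_pi, Finset.prod_const, Nat.card_zmod, Finset.card_univ, Fintype.card_coe]
  have hcardT : ∀ w : ↥N, Nat.card (T w) ≤ p := by
    intro w
    obtain ⟨hcyc, _⟩ := hH w.1
    letI : Fintype (H w.1) := Fintype.ofFinite _
    rw [hT]
    rw [Nat.card_eq_fintype_card, Fintype.card_subtype]
    exact IsCyclic.card_pow_eq_one_le hp.pos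
  have hcard2 : Nat.card ((w : ↥N) → T w) ≤ p ^ N.card := by
    rw [Nat.card_pi]
    calc ∏ w : ↥N, Nat.card (T w) ≤ p ^ (Finset.univ : Finset ↥N).card :=
          Finset.prod_le_pow_card _ _ _ (fun w _ => hcardT w)
      _ = p ^ N.card := by rw [Finset.card_univ, Fintype.card_coe]
  have hle := Nat.card_le_card_of_injective F hFinj
  rw [hcard1] at hle
  exact (pow_le_pow_iff_right₀ hp.one_lt).mp (hle.trans hcard2)

open scoped Classical in
theorem hall_cond [∀ v, Nontrivial (G v)]
    (hG : ∀ v, ∃ p n : ℕ, p.Prime ∧ Nat.card (G v) = p ^ n)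
    (x : ∀ v, G v) (hx : ∀ v, Subgroup.zpowers (x v) = ⊤)
    (hH : ∀ w, IsCyclic (H w) ∧ ∃ p n : ℕ, p.Prime ∧ Nat.card (H w) = p ^ n)
    (θ : (∀ v, G v) ≃* (∀ w, H w)) (s : Finset V) :
    s.card ≤ (s.biUnion (fun u => Finset.univ.filter (fun w =>
      Nat.card (H w) = Nat.card (G u) ∧ θ (Pi.mulSingle u (x u)) w ≠ 1))).card := by
  set t : V → Finset W := fun u => Finset.univ.filter (fun w =>
      Nat.card (H w) = Nat.card (G u) ∧ θ (Pi.mulSingle u (x u)) w ≠ 1) with ht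
  set I := s.image (fun u => Nat.card (G u)) with hI
  set sc : ℕ → Finset V := fun c => s.filter (fun u => Nat.card (G u) = c) with hsc
  have hdecomp : s.card = ∑ c ∈ I, (sc c).card := by
    rw [← Finset.card_biUnion]
    · congr 1
      ext u
      constructor
      · intro hu
        exact Finset.mem_biUnion.mpr ⟨Nat.card (G u), Finset.mem_image.mpr ⟨u, hu, rfl⟩,
          Finset.mem_filter.mpr ⟨hu, rfl⟩⟩
      · intro hu
        obtain ⟨c, _, hu2⟩ := Finset.mem_biUnion.mp hu
        exact (Finset.mem_filter.mp hu2).1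
    · intro c1 _ c2 _ hne
      rw [Function.onFun, Finset.disjoint_left]
      intro u hu1 hu2
      rw [hsc] at hu1 hu2
      simp only [Finset.mem_filter] at hu1 hu2
      exact hne (hu1.2 ▸ hu2.2)
  have hstep : ∀ c ∈ I, (sc c).card ≤ ((sc c).biUnion t).card := by
    intro c hc
    obtain ⟨u₀, hu₀s, hu₀⟩ := Finset.mem_image.mp hc
    obtain ⟨p, n, hp, hcard⟩ := hG u₀
    haveI : Finite (G u₀) := (Nat.card_pos_iff.mp (hcard ▸ pow_pos hp.pos n)).2
    have hn : 1 ≤ n := by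
      by_contra hcon
      have hn0 : n = 0 := by omega
      rw [hn0, pow_zero] at hcard
      have := Finite.one_lt_card (α := G u₀)
      omega
    exact class_card_le x hx hH θ hp hn (sc c)
      (fun u hu => by
        rw [(Finset.mem_filter.mp hu).2, ← hu₀, hcard])
  have hdisj : ∀ c1 ∈ I, ∀ c2 ∈ I, c1 ≠ c2 →
      Disjoint ((sc c1).biUnion t) ((sc c2).biUnion t) := by
    intro c1 _ c2 _ hne
    rw [Finset.disjoint_left]
    intro w hw1 hw2
    obtain ⟨u1, hu1, hwt1⟩ := Finset.mem_biUnion.mp hw1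
    obtain ⟨u2, hu2, hwt2⟩ := Finset.mem_biUnion.mp hw2
    have h1 : Nat.card (H w) = c1 :=
      ((Finset.mem_filter.mp hwt1).2.1).trans ((Finset.mem_filter.mp hu1).2)
    have h2 : Nat.card (H w) = c2 :=
      ((Finset.mem_filter.mp hwt2).2.1).trans ((Finset.mem_filter.mp hu2).2)
    exact hne (h1.symm.trans h2)
  calc s.card = ∑ c ∈ I, (sc c).card := hdecomp
    _ ≤ ∑ c ∈ I, ((sc c).biUnion t).card := Finset.sum_le_sum hstep
    _ = (I.biUnion (fun c => (sc c).biUnion t)).card := (Finset.card_biUnion hdisj).symm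
    _ ≤ (s.biUnion t).card := Finset.card_le_card (by
        intro w hw
        obtain ⟨c, _, hw2⟩ := Finset.mem_biUnion.mp hw
        obtain ⟨u, hu, hwt⟩ := Finset.mem_biUnion.mp hw2
        exact Finset.mem_biUnion.mpr ⟨u, (Finset.mem_filter.mp hu).1, hwt⟩)

open scoped Classical in
theorem matching [∀ v, Nontrivial (G v)]
    (hG : ∀ v, ∃ p n : ℕ, p.Prime ∧ Nat.card (G v) = p ^ n)
    (x : ∀ v, G v) (hx : ∀ v, Subgroup.zpowers (x v) = ⊤)
    (hH : ∀ w, IsCyclic (H w) ∧ ∃ p n : ℕ, p.Prime ∧ Nat.card (H w) = p ^ n)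
    (θ : (∀ v, G v) ≃* (∀ w, H w)) :
    ∃ f : V → W, Function.Injective f ∧ ∀ u,
      Nat.card (H (f u)) = Nat.card (G u) ∧ θ (Pi.mulSingle u (x u)) (f u) ≠ 1 := by
  obtain ⟨f, hfinj, hf⟩ := (Finset.all_card_le_biUnion_card_iff_exists_injective
    (fun u => Finset.univ.filter (fun w =>
      Nat.card (H w) = Nat.card (G u) ∧ θ (Pi.mulSingle u (x u)) w ≠ 1))).mp
    (fun s => hall_cond hG x hx hH θ s)
  exact ⟨f, hfinj, fun u => (Finset.mem_filter.mp (hf u)).2⟩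

end Matching

section GPIso

variable {V : Type} [Fintype V] [DecidableEq V] (Γ : SimpleGraph V)
  (G : V → Type) [∀ v, CommGroup (G v)]

noncomputable def gpToPi : GP Γ G →* ∀ v, G v :=
  QuotientGroup.lift _ (CoprodI.lift fun v => MonoidHom.mulSingle G v)
    (Subgroup.normalClosure_le_normal (by
      rintro _ ⟨u, v, g, h, hadj, rfl⟩
      have hcomm : Commute (Pi.mulSingle u g) (Pi.mulSingle v h) :=
        Pi.mulSingle_commute hadj.ne g h
      simp only [SetLike.mem_coe, MonoidHom.mem_ker, map_commutatorElement,
        CoprodI.lift_of]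
      exact commutatorElement_eq_one_iff_commute.mpr hcomm))

lemma gpToPi_of (v : V) (g : G v) :
    gpToPi Γ G (GP.of Γ G v g) = Pi.mulSingle v g := by
  show gpToPi Γ G (QuotientGroup.mk' (gpRel Γ G) (CoprodI.of g)) = _
  rw [QuotientGroup.mk'_apply]
  show QuotientGroup.lift _ _ _ (QuotientGroup.mk _) = _
  exact CoprodI.lift_of (fun v => MonoidHom.mulSingle G v) g

lemma gp_of_commute (hΓ : ∀ u v : V, u ≠ v → Γ.Adj u v) :
    Pairwise fun i j => ∀ (g : G i) (h : G j),
      Commute (GP.of Γ G i g) (GP.of Γ G j h) := by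
  intro i j hij g h
  rw [← commutatorElement_eq_one_iff_commute]
  have h1 : (⁅(CoprodI.of g : CoprodI G), CoprodI.of h⁆) ∈ gpRel Γ G :=
    Subgroup.subset_normalClosure ⟨i, j, g, h, hΓ i j hij, rfl⟩
  have h2 : ⁅GP.of Γ G i g, GP.of Γ G j h⁆
      = QuotientGroup.mk' (gpRel Γ G) ⁅CoprodI.of g, CoprodI.of h⁆ := by
        rw [map_commutatorElement]; rfl
  exact h2.trans ((QuotientGroup.eq_one_iff _).mpr h1)

noncomputable def gpEquivPi (hΓ : ∀ u v : V, u ≠ v → Γ.Adj u v) :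
    GP Γ G ≃* ∀ v, G v :=
  MonoidHom.toMulEquiv (gpToPi Γ G)
    (MonoidHom.noncommPiCoprod (GP.of Γ G) (gp_of_commute Γ G hΓ))
    (by
      apply MonoidHom.ext
      intro a
      refine QuotientGroup.induction_on a ?_
      intro y
      induction y using CoprodI.induction_on with
      | one =>
        exact (map_one _).trans (map_one _).symm
      | of i m =>
        show MonoidHom.noncommPiCoprod (GP.of Γ G) (gp_of_commute Γ G hΓ)
          (gpToPi Γ G (GP.of Γ G i m)) = _
        rw [gpToPi_of, MonoidHom.noncommPiCoprod_mulSingle]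
        rfl
      | mul y z ihy ihz =>
        exact (map_mul _ _ _).trans ((congrArg₂ (· * ·) ihy ihz).trans (map_mul _ _ _).symm))
    (by
      apply MonoidHom.functions_ext
      intro i m
      show gpToPi Γ G (MonoidHom.noncommPiCoprod (GP.of Γ G) (gp_of_commute Γ G hΓ)
        (Pi.mulSingle i m)) = _
      rw [MonoidHom.noncommPiCoprod_mulSingle, gpToPi_of]
      rfl)

lemma gpEquivPi_of (hΓ : ∀ u v : V, u ≠ v → Γ.Adj u v) (v : V) (g : G v) :
    gpEquivPi Γ G hΓ (GP.of Γ G v g) = Pi.mulSingle v g :=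
  gpToPi_of Γ G v g

lemma gpEquivPi_symm_single (hΓ : ∀ u v : V, u ≠ v → Γ.Adj u v) (v : V) (g : G v) :
    (gpEquivPi Γ G hΓ).symm (Pi.mulSingle v g) = GP.of Γ G v g :=
  (MulEquiv.symm_apply_eq _).mpr (gpEquivPi_of Γ G hΓ v g).symm

lemma mem_supp_of_ne (hΓ : ∀ u v : V, u ≠ v → Γ.Adj u v) (g : GP Γ G) (v : V)
    (h : gpEquivPi Γ G hΓ g v ≠ 1) : v ∈ supp Γ G g := by
  intro S hS
  by_contra hv
  apply h
  have hle : WS Γ G S ≤ Subgroup.comap (gpToPi Γ G)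
      (Subgroup.pi Sᶜ (fun _ => ⊥)) := by
    apply iSup_le
    intro u
    apply iSup_le
    intro hu
    rintro _ ⟨m, rfl⟩
    rw [Subgroup.mem_comap, gpToPi_of, Subgroup.mem_pi]
    intro w hw
    rw [Subgroup.mem_bot]
    exact Pi.mulSingle_eq_of_ne (fun hwu => hw (by rw [hwu]; exact hu)) m
  have := hle hS v hv
  exact this

end GPIso


/-- Rigidity for finite abelian groups decomposed as direct products of primary
cyclic groups: for complete graphs with primary cyclic vertex groups, every
group isomorphism yields a labeled-graph isomorphism `t` with
`t(u) ∈ supp(τ(x_u))` for every vertex `u`. -/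
theorem precise_rigidity_complete_graphs_primary_cyclic
    {V W : Type} [Fintype V] [Nonempty V] [Fintype W] [Nonempty W]
    (Γ : SimpleGraph V) (Δ : SimpleGraph W)
    (hΓ : ∀ u v : V, u ≠ v → Γ.Adj u v) (hΔ : ∀ u v : W, u ≠ v → Δ.Adj u v)
    (G : V → Type) (H : W → Type) [∀ v, Group (G v)] [∀ w, Group (H w)]
    [∀ v, Nontrivial (G v)] [∀ w, Nontrivial (H w)]
    (hG : ∀ v, ∃ p n : ℕ, p.Prime ∧ Nat.card (G v) = p ^ n)
    (x : ∀ v, G v) (hx : ∀ v, Subgroup.zpowers (x v) = ⊤)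
    (hH : ∀ w, IsCyclic (H w) ∧ ∃ p n : ℕ, p.Prime ∧ Nat.card (H w) = p ^ n)
    (τ : GP Γ G ≃* GP Δ H) :
    ∃ f : V ≃ W, (∀ u v : V, Γ.Adj u v ↔ Δ.Adj (f u) (f v)) ∧
      (∀ u : V, Nonempty (G u ≃* H (f u))) ∧
      ∀ u : V, f u ∈ supp Δ H (τ (GP.of Γ G u (x u))) := by
  classical
  letI : ∀ v, IsCyclic (G v) := fun v => isCyclic_of_zpowers_top (hx v)
  letI : ∀ w, IsCyclic (H w) := fun w => (hH w).1
  letI : ∀ v, CommGroup (G v) := fun v => IsCyclic.commGroup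
  letI : ∀ w, CommGroup (H w) := fun w => IsCyclic.commGroup
  let πΓ := gpEquivPi Γ G hΓ
  let πΔ := gpEquivPi Δ H hΔ
  let θ : (∀ v, G v) ≃* (∀ w, H w) := (πΓ.symm.trans τ).trans πΔ
  obtain ⟨f, hfinj, hf⟩ := matching hG x hx (fun w => ⟨inferInstance, (hH w).2⟩) θ
  have hy : ∀ w, ∃ y : H w, Subgroup.zpowers y = ⊤ := fun w => by
    obtain ⟨g, hg⟩ := IsCyclic.exists_generator (α := H w)
    exact ⟨g, (Subgroup.eq_top_iff' _).mpr hg⟩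
  choose y hygen using hy
  obtain ⟨g', hginj, -⟩ := matching (fun w => (hH w).2) y hygen
    (fun v => ⟨inferInstance, hG v⟩) θ.symm
  have hcardVW : Fintype.card V = Fintype.card W :=
    le_antisymm (Fintype.card_le_of_injective f hfinj)
      (Fintype.card_le_of_injective g' hginj)
  let e : V ≃ W := Equiv.ofBijective f
    ((Fintype.bijective_iff_injective_and_card f).mpr ⟨hfinj, hcardVW⟩)
  have he : ∀ u, e u = f u := fun u => rfl
  refine ⟨e, ?_, ?_, ?_⟩
  · intro u v
    constructor
    · intro hadj
      exact hΔ _ _ (fun hfe => hadj.ne (e.injective hfe))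
    · intro hadj
      exact hΓ _ _ (fun huv => hadj.ne (congrArg e huv))
  · intro u
    exact ⟨mulEquivOfCyclicCardEq ((hf u).1.symm)⟩
  · intro u
    have hne := (hf u).2
    have hθs : θ (Pi.mulSingle u (x u)) = πΔ (τ (GP.of Γ G u (x u))) := by
      show πΔ (τ (πΓ.symm (Pi.mulSingle u (x u)))) = _
      rw [gpEquivPi_symm_single]
    apply mem_supp_of_ne Δ H hΔ (τ (GP.of Γ G u (x u))) (e u)
    rw [he u, ← hθs]
    exact hne
end
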